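/- arXiv:1210.0524 — 2 statements merged into one kernel-verified Lean document; each statement's English description precedes it below -/
import Mathlib

section
/- (Continuation Principle) Let G be a graph and let A, B ⊆ V(G) with B ⊆ A. Let G_A and G_B denote the partially dominated games on G where the sets A and B, respectively, are already dominated. Then γ_g(G_A) ≤ γ_g(G_B) and γ_g'(G_A) ≤ γ_g'(G_B). -/
open Finset

namespace DomGame

variable {V : Type*} [Fintype V] [DecidableEq V]

/-- Closed neighborhood of `v` in `G`, as a `Finset`. -/
noncomputable def cn (G : SimpleGraph V) (v : V) : Finset V :=
  haveI : DecidablePred (fun u : V => u = v ∨ G.Adj v u) := fun _ => Classical.propDecidable _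
  Finset.univ.filter (fun u : V => u = v ∨ G.Adj v u)

/-- Value (number of remaining moves, optimal play) of the domination game on `G`,
with fuel, where `D` is the set of already dominated vertices and `who = true`
means Dominator is to move (minimizing); `who = false` means Staller (maximizing). -/
noncomputable def auxVal (G : SimpleGraph V) : ℕ → Bool → Finset V → ℕ
  | 0, _, _ => 0
  | n + 1, who, D =>
    if D = Finset.univ then 0
    else
      haveI : DecidablePred (fun v : V => ¬ cn G v ⊆ D) := fun _ => Classical.propDecidable _
      let moves : Finset V := Finset.univ.filter (fun v : V => ¬ cn G v ⊆ D)
      if who then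
        WithTop.untopD 0 ((moves.image (fun v => 1 + auxVal G n false (D ∪ cn G v))).min)
      else
        moves.sup (fun v => 1 + auxVal G n true (D ∪ cn G v))

/-- Remaining moves of the domination game on the partially dominated graph `(G, D)`,
Dominator to move, both players optimal. -/
noncomputable def gVal (G : SimpleGraph V) (D : Finset V) : ℕ :=
  auxVal G (Fintype.card V) true D

/-- Remaining moves, Staller to move. -/
noncomputable def gVal' (G : SimpleGraph V) (D : Finset V) : ℕ :=
  auxVal G (Fintype.card V) false D

/-- The game domination number (Dominator starts). -/
noncomputable def gammaG (G : SimpleGraph V) : ℕ := gVal G ∅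

/-- The Staller-start game domination number. -/
noncomputable def gammaG' (G : SimpleGraph V) : ℕ := gVal' G ∅

/-- `S` is a dominating set of `G`. -/
def IsDomSet (G : SimpleGraph V) (S : Finset V) : Prop :=
  ∀ v : V, ∃ u ∈ S, u = v ∨ G.Adj u v

/-- The domination number of `G`. -/
noncomputable def gamma (G : SimpleGraph V) : ℕ :=
  sInf {n | ∃ S : Finset V, IsDomSet G S ∧ S.card = n}

lemma mem_cn_self (G : SimpleGraph V) (v : V) : v ∈ cn G v := by
  simp [cn, Finset.mem_filter]

lemma auxVal_succ (G : SimpleGraph V) (n : ℕ) (who : Bool) (D : Finset V) :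
    auxVal G (n+1) who D =
      if D = Finset.univ then 0
      else
        if who then
          WithTop.untopD 0 (((Finset.univ.filter (fun v : V => ¬ cn G v ⊆ D)).image
            (fun v => 1 + auxVal G n false (D ∪ cn G v))).min)
        else
          (Finset.univ.filter (fun v : V => ¬ cn G v ⊆ D)).sup
            (fun v => 1 + auxVal G n true (D ∪ cn G v)) := by
  rw [auxVal]
  simp only [Finset.filter_congr_decidable]
  congr!

lemma movesne (G : SimpleGraph V) (D : Finset V) (hD : D ≠ Finset.univ) :
    (Finset.univ.filter (fun v : V => ¬ cn G v ⊆ D)).Nonempty := by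
  obtain ⟨w, hw⟩ : ∃ w, w ∉ D := by
    by_contra h
    push_neg at h
    exact hD (Finset.eq_univ_iff_forall.mpr h)
  refine ⟨w, ?_⟩
  simp only [Finset.mem_filter, Finset.mem_univ, true_and]
  exact fun hsub => hw (hsub (mem_cn_self G w))

lemma aux_mono (G : SimpleGraph V) :
    ∀ (n : ℕ) (who : Bool) (D D' : Finset V), D ⊆ D' →
      auxVal G n who D' ≤ auxVal G n who D := by
  intro n
  induction n with
  | zero => intros; simp [auxVal]
  | succ n ih =>
    have skip : ∀ (D E : Finset V), E ⊆ D →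
        auxVal G (n+1) true D ≤ 1 + auxVal G n false E := by
      intro D E hsub
      by_cases hD : D = Finset.univ
      · rw [auxVal_succ, if_pos hD]; exact Nat.zero_le _
      · rw [auxVal_succ, if_neg hD, if_pos rfl]
        obtain ⟨v, hv⟩ := movesne G D hD
        have hne : ((Finset.univ.filter (fun v : V => ¬ cn G v ⊆ D)).image
            (fun v => 1 + auxVal G n false (D ∪ cn G v))).Nonempty :=
          ⟨_, Finset.mem_image_of_mem _ hv⟩
        rw [← Finset.coe_min' hne, WithTop.untopD_coe]
        have h1 := Finset.min'_le _ _ (Finset.mem_image_of_mem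
          (fun v => 1 + auxVal G n false (D ∪ cn G v)) hv)
        refine le_trans h1 ?_
        have h2 := ih false E (D ∪ cn G v) (hsub.trans Finset.subset_union_left)
        omega
    intro who D D' hDD'
    by_cases hD' : D' = Finset.univ
    · rw [auxVal_succ, if_pos hD']; exact Nat.zero_le _
    have hD : D ≠ Finset.univ := fun h => hD' (Finset.univ_subset_iff.mp (h ▸ hDD'))
    cases who with
    | false =>
      rw [auxVal_succ, auxVal_succ, if_neg hD', if_neg hD]
      simp only [Bool.false_eq_true, if_false]
      refine Finset.sup_le ?_
      intro v hv
      have hv' : v ∈ Finset.univ.filter (fun v : V => ¬ cn G v ⊆ D) := by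
        simp only [Finset.mem_filter, Finset.mem_univ, true_and] at hv ⊢
        exact fun hsub => hv (hsub.trans hDD')
      refine le_trans ?_ (Finset.le_sup (f := fun v => 1 + auxVal G n true (D ∪ cn G v)) hv')
      have := ih true (D ∪ cn G v) (D' ∪ cn G v) (Finset.union_subset_union_left hDD')
      omega
    | true =>
      -- rewrite only RHS
      obtain ⟨v, hvm, hvmin⟩ := Finset.exists_min_image
        (Finset.univ.filter (fun v : V => ¬ cn G v ⊆ D))
        (fun v => 1 + auxVal G n false (D ∪ cn G v)) (movesne G D hD)
      have hne : ((Finset.univ.filter (fun v : V => ¬ cn G v ⊆ D)).image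
          (fun v => 1 + auxVal G n false (D ∪ cn G v))).Nonempty :=
        ⟨_, Finset.mem_image_of_mem _ hvm⟩
      have hRHS : auxVal G (n+1) true D = 1 + auxVal G n false (D ∪ cn G v) := by
        rw [auxVal_succ, if_neg hD, if_pos rfl, ← Finset.coe_min' hne, WithTop.untopD_coe]
        refine le_antisymm (Finset.min'_le _ _ (Finset.mem_image_of_mem _ hvm)) ?_
        obtain ⟨u, hu, he⟩ := Finset.mem_image.mp (Finset.min'_mem _ hne)
        exact he ▸ hvmin u hu
      rw [hRHS]
      by_cases hvD' : cn G v ⊆ D'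
      · exact skip D' (D ∪ cn G v) (Finset.union_subset hDD' hvD')
      · -- v is also a legal move from D'
        rw [auxVal_succ, if_neg hD', if_pos rfl]
        have hvm' : v ∈ Finset.univ.filter (fun v : V => ¬ cn G v ⊆ D') := by
          simp only [Finset.mem_filter, Finset.mem_univ, true_and]
          exact hvD'
        have hne' : ((Finset.univ.filter (fun v : V => ¬ cn G v ⊆ D')).image
            (fun v => 1 + auxVal G n false (D' ∪ cn G v))).Nonempty :=
          ⟨_, Finset.mem_image_of_mem _ hvm'⟩
        rw [← Finset.coe_min' hne', WithTop.untopD_coe]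
        have h1 := Finset.min'_le _ _ (Finset.mem_image_of_mem
          (fun v => 1 + auxVal G n false (D' ∪ cn G v)) hvm')
        refine le_trans h1 ?_
        have := ih false (D ∪ cn G v) (D' ∪ cn G v) (Finset.union_subset_union_left hDD')
        omega

end DomGame

/-- Continuation Principle: if B ⊆ A then γ_g(G_A) ≤ γ_g(G_B) and
γ_g'(G_A) ≤ γ_g'(G_B). -/
theorem stmt2 {V : Type*} [Fintype V] [DecidableEq V] (G : SimpleGraph V)
    (A B : Finset V) (hBA : B ⊆ A) :
    DomGame.gVal G A ≤ DomGame.gVal G B ∧ DomGame.gVal' G A ≤ DomGame.gVal' G B :=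
  ⟨DomGame.aux_mono G _ true B A hBA, DomGame.aux_mono G _ false B A hBA⟩
end

section
/- Let s ≥ t+1 ≥ 2 and let T(s,t) be the caterpillar consisting of a path v_1,…,v_t where each v_i additionally has s−1 pendant leaves attached. Then γ_g(T(s,t)) = 2t − 1. -/
open Finset

namespace DomGame

variable {V : Type*} [Fintype V] [DecidableEq V]

lemma untop'_min_le {S : Finset ℕ} {a : ℕ} (h : a ∈ S) : WithTop.untopD 0 S.min ≤ a := by
  have hne : S.Nonempty := ⟨a, h⟩
  rw [← Finset.coe_min' hne, WithTop.untopD_coe]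
  exact Finset.min'_le _ _ h

lemma le_untop'_min {S : Finset ℕ} {m : ℕ} (hne : S.Nonempty) (h : ∀ a ∈ S, m ≤ a) :
    m ≤ WithTop.untopD 0 S.min := by
  rw [← Finset.coe_min' hne, WithTop.untopD_coe]
  exact h _ (Finset.min'_mem _ _)

variable {G : SimpleGraph V}

omit [DecidableEq V] in
lemma mem_cn {u v : V} : u ∈ cn G v ↔ (u = v ∨ G.Adj v u) := by
  classical
  simp [cn]

omit [DecidableEq V] in
lemma self_mem_cn (v : V) : v ∈ cn G v := mem_cn.2 (Or.inl rfl)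

omit [DecidableEq V] in
lemma exists_move {D : Finset V} (hD : D ≠ univ) : ∃ v, ¬ cn G v ⊆ D := by
  have : ∃ v, v ∉ D := by
    by_contra h
    push_neg at h
    exact hD (eq_univ_iff_forall.2 h)
  obtain ⟨v, hv⟩ := this
  exact ⟨v, fun hsub => hv (hsub (self_mem_cn v))⟩

lemma card_sdiff_union_lt {D : Finset V} {v : V} (hv : ¬ cn G v ⊆ D) :
    (univ \ (D ∪ cn G v)).card < (univ \ D).card := by
  obtain ⟨x, hx, hxD⟩ := not_subset.1 hv
  apply card_lt_card
  constructor
  · intro y hy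
    simp only [mem_sdiff, mem_union, mem_univ, true_and] at *
    tauto
  · intro hsub
    have := hsub (by simp [hxD] : x ∈ univ \ D)
    simp [hx] at this

lemma auxVal_true_succ_le {D : Finset V} {v : V} (hv : ¬ cn G v ⊆ D) (n : ℕ) :
    auxVal G (n+1) true D ≤ 1 + auxVal G n false (D ∪ cn G v) := by
  have hD : D ≠ univ := fun h => hv (h ▸ subset_univ _)
  rw [auxVal]
  simp only [if_neg hD, if_true]
  refine untop'_min_le (Finset.mem_image_of_mem _ ?_)
  simp [hv]

lemma auxVal_true_succ_ge {D : Finset V} (hD : D ≠ univ) {n m : ℕ}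
    (h : ∀ v, ¬ cn G v ⊆ D → m ≤ 1 + auxVal G n false (D ∪ cn G v)) :
    m ≤ auxVal G (n+1) true D := by
  obtain ⟨w, hw⟩ := exists_move (G := G) hD
  rw [auxVal]
  simp only [if_neg hD, if_true]
  refine le_untop'_min ⟨1 + auxVal G n false (D ∪ cn G w), Finset.mem_image_of_mem _ ?_⟩ ?_
  · simp [hw]
  intro a ha
  simp only [Finset.mem_image, Finset.mem_filter] at ha
  obtain ⟨v, ⟨-, hvmem⟩, rfl⟩ := ha
  exact h v hvmem

lemma auxVal_false_succ_ge {D : Finset V} {v : V} (hv : ¬ cn G v ⊆ D) (n : ℕ) :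
    1 + auxVal G n true (D ∪ cn G v) ≤ auxVal G (n+1) false D := by
  have hD : D ≠ univ := fun h => hv (h ▸ subset_univ _)
  rw [auxVal]
  simp only [if_neg hD, Bool.false_eq_true, if_false]
  refine Finset.le_sup (f := fun v => 1 + auxVal G n true (D ∪ cn G v)) ?_
  simp [hv]

lemma auxVal_false_succ_le {D : Finset V} (hD : D ≠ univ) {n m : ℕ}
    (h : ∀ v, ¬ cn G v ⊆ D → 1 + auxVal G n true (D ∪ cn G v) ≤ m) :
    auxVal G (n+1) false D ≤ m := by
  rw [auxVal]
  simp only [if_neg hD, Bool.false_eq_true, if_false]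
  refine Finset.sup_le fun v hv => ?_
  simp only [Finset.mem_filter] at hv
  exact h v hv.2

lemma auxVal_univ (n : ℕ) (who : Bool) : auxVal G n who (univ : Finset V) = 0 := by
  cases n <;> simp [auxVal]



end DomGame

/-- The caterpillar `T(s,t)`: a path `v_1, …, v_t` (the vertices `(i, 0)`),
with `s − 1` pendant leaves `(i, j)`, `j ≠ 0`, attached to each `v_i`. -/
def caterpillar (s t : ℕ) : SimpleGraph (Fin t × Fin s) :=
  SimpleGraph.fromRel (fun a b =>
    ((a.2 : ℕ) = 0 ∧ (b.2 : ℕ) = 0 ∧ (a.1 : ℕ) + 1 = (b.1 : ℕ)) ∨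
    (a.1 = b.1 ∧ (a.2 : ℕ) = 0 ∧ (b.2 : ℕ) ≠ 0))

namespace Stmt5Aux
open DomGame

variable (s t : ℕ)

def lv (i : Fin t) : Finset (Fin t × Fin s) :=
  univ.filter fun p => p.1 = i ∧ (p.2 : ℕ) ≠ 0

def colF (i : Fin t) : Finset (Fin t × Fin s) :=
  univ.filter fun p => p.1 = i

def openCols (D : Finset (Fin t × Fin s)) : Finset (Fin t) :=
  univ.filter fun i => ¬ lv s t i ⊆ D

def nOpen (D : Finset (Fin t × Fin s)) : ℕ := (openCols s t D).card

def hits (D : Finset (Fin t × Fin s)) : ℕ :=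
  ∑ i ∈ openCols s t D, (lv s t i ∩ D).card

def psi (D : Finset (Fin t × Fin s)) : ℕ :=
  (univ.filter fun i : Fin t => ¬ colF s t i ⊆ D).card

variable {s t}

lemma mem_lv {i : Fin t} {p : Fin t × Fin s} :
    p ∈ lv s t i ↔ p.1 = i ∧ (p.2 : ℕ) ≠ 0 := by simp [lv]

lemma mem_colF {i : Fin t} {p : Fin t × Fin s} :
    p ∈ colF s t i ↔ p.1 = i := by simp [colF]

lemma mem_openCols {i : Fin t} {D : Finset (Fin t × Fin s)} :
    i ∈ openCols s t D ↔ ¬ lv s t i ⊆ D := by simp [openCols]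

lemma cat_adj {a b : Fin t × Fin s} :
    (caterpillar s t).Adj a b ↔ a ≠ b ∧
      ((((a.2 : ℕ) = 0 ∧ (b.2 : ℕ) = 0 ∧ (a.1 : ℕ) + 1 = (b.1 : ℕ)) ∨
        (a.1 = b.1 ∧ (a.2 : ℕ) = 0 ∧ (b.2 : ℕ) ≠ 0)) ∨
       (((b.2 : ℕ) = 0 ∧ (a.2 : ℕ) = 0 ∧ (b.1 : ℕ) + 1 = (a.1 : ℕ)) ∨
        (b.1 = a.1 ∧ (b.2 : ℕ) = 0 ∧ (a.2 : ℕ) ≠ 0))) := by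
  rw [caterpillar, SimpleGraph.fromRel_adj]

/-- Leaves of other columns are never in a closed neighborhood. -/
lemma lv_cn_disj {v : Fin t × Fin s} {j : Fin t} (hj : j ≠ v.1)
    {x : Fin t × Fin s} (hx : x ∈ lv s t j) : x ∉ cn (caterpillar s t) v := by
  rw [mem_lv] at hx
  intro hmem
  rw [mem_cn] at hmem
  rcases hmem with h | h
  · exact hj (h ▸ hx.1 ▸ rfl)
  · rw [cat_adj] at h
    obtain ⟨-, h⟩ := h
    have hx1 : x.1 = j := hx.1
    have hx2 : (x.2 : ℕ) ≠ 0 := hx.2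
    rcases h with (⟨h1, h2, h3⟩ | ⟨h1, h2, h3⟩) | (⟨h1, h2, h3⟩ | ⟨h1, h2, h3⟩)
    · exact hx2 h2
    · exact hj (h1 ▸ hx1 ▸ rfl)
    · exact hx2 h1
    · exact hj (h1.symm ▸ hx1 ▸ rfl)

/-- If `v` is a spine vertex, its whole column is in its closed neighborhood. -/
lemma colF_sub_cn {v : Fin t × Fin s} (hv : (v.2 : ℕ) = 0) :
    colF s t v.1 ⊆ cn (caterpillar s t) v := by
  intro x hx
  rw [mem_colF] at hx
  rw [mem_cn]
  by_cases hxv : x = v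
  · exact Or.inl hxv
  · right
    rw [cat_adj]
    refine ⟨fun h => hxv h.symm, ?_⟩
    by_cases hx2 : (x.2 : ℕ) = 0
    · exfalso
      apply hxv
      have : x.2 = v.2 := Fin.ext (by omega)
      exact Prod.ext hx this
    · exact Or.inl (Or.inr ⟨hx.symm, hv, hx2⟩)

/-- If `v` is a leaf, the only leaf of its own column in its closed neighborhood is `v`. -/
lemma cn_leaf_lv_self {v : Fin t × Fin s} (hv : (v.2 : ℕ) ≠ 0)
    {x : Fin t × Fin s} (hx : x ∈ lv s t v.1) (hc : x ∈ cn (caterpillar s t) v) : x = v := by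
  rw [mem_lv] at hx
  rw [mem_cn] at hc
  rcases hc with h | h
  · exact h
  · exfalso
    rw [cat_adj] at h
    obtain ⟨-, h⟩ := h
    rcases h with (⟨h1, h2, h3⟩ | ⟨h1, h2, h3⟩) | (⟨h1, h2, h3⟩ | ⟨h1, h2, h3⟩)
    · exact hv h1
    · exact hv h2
    · exact hx.2 h1
    · exact hx.2 h2

lemma lv_inter_union_eq {v : Fin t × Fin s} {j : Fin t} (hj : j ≠ v.1)
    (D : Finset (Fin t × Fin s)) :
    lv s t j ∩ (D ∪ cn (caterpillar s t) v) = lv s t j ∩ D := by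
  ext x
  simp only [Finset.mem_inter, Finset.mem_union]
  constructor
  · rintro ⟨hx, hD | hcn⟩
    · exact ⟨hx, hD⟩
    · exact absurd hcn (lv_cn_disj hj hx)
  · rintro ⟨hx, hD⟩
    exact ⟨hx, Or.inl hD⟩

lemma open_iff_of_ne {v : Fin t × Fin s} {j : Fin t} (hj : j ≠ v.1)
    {D : Finset (Fin t × Fin s)} :
    (j ∈ openCols s t (D ∪ cn (caterpillar s t) v)) ↔ j ∈ openCols s t D := by
  rw [mem_openCols, mem_openCols]
  constructor
  · intro h hsub
    exact h (hsub.trans Finset.subset_union_left)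
  · intro h hsub
    apply h
    intro x hx
    rcases Finset.mem_union.1 (hsub hx) with h' | h'
    · exact h'
    · exact absurd h' (lv_cn_disj hj hx)

lemma openCols_antitone {D D' : Finset (Fin t × Fin s)} (h : D ⊆ D') :
    openCols s t D' ⊆ openCols s t D := by
  intro i hi
  rw [mem_openCols] at *
  exact fun hsub => hi (hsub.trans h)

lemma effect_open (v : Fin t × Fin s) (D : Finset (Fin t × Fin s))
    (hop : v.1 ∈ openCols s t (D ∪ cn (caterpillar s t) v)) :
    openCols s t (D ∪ cn (caterpillar s t) v) = openCols s t D ∧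
    hits s t (D ∪ cn (caterpillar s t) v) ≤ hits s t D + 1 := by
  set G := caterpillar s t
  set D' := D ∪ cn G v with hD'
  -- v must be a leaf
  have hleaf : (v.2 : ℕ) ≠ 0 := by
    intro hv0
    rw [mem_openCols] at hop
    apply hop
    intro x hx
    have : x ∈ colF s t v.1 := mem_colF.2 (mem_lv.1 hx).1
    exact Finset.mem_union_right _ (colF_sub_cn hv0 this)
  have hopeq : openCols s t D' = openCols s t D := by
    ext j
    by_cases hj : j = v.1
    · subst hj
      simp only [hop, true_iff]
      exact openCols_antitone Finset.subset_union_left hop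
    · exact open_iff_of_ne hj
  refine ⟨hopeq, ?_⟩
  have hi0 : v.1 ∈ openCols s t D := hopeq ▸ hop
  rw [hits, hits, hopeq]
  rw [← Finset.add_sum_erase _ _ hi0, ← Finset.add_sum_erase _ _ hi0]
  have herase : ∀ j ∈ (openCols s t D).erase v.1,
      (lv s t j ∩ D').card = (lv s t j ∩ D).card := by
    intro j hj
    rw [lv_inter_union_eq (Finset.mem_erase.1 hj).1]
  rw [Finset.sum_congr rfl herase]
  have hcard : (lv s t v.1 ∩ D').card ≤ (lv s t v.1 ∩ D).card + 1 := by
    have hsub : lv s t v.1 ∩ D' ⊆ (lv s t v.1 ∩ D) ∪ {v} := by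
      intro x hx
      obtain ⟨hx1, hx2⟩ := Finset.mem_inter.1 hx
      rcases Finset.mem_union.1 hx2 with h' | h'
      · exact Finset.mem_union_left _ (Finset.mem_inter.2 ⟨hx1, h'⟩)
      · exact Finset.mem_union_right _ (by simp [cn_leaf_lv_self hleaf hx1 h'])
    calc (lv s t v.1 ∩ D').card ≤ ((lv s t v.1 ∩ D) ∪ {v}).card := Finset.card_le_card hsub
      _ ≤ (lv s t v.1 ∩ D).card + 1 := by
          refine (Finset.card_union_le _ _).trans ?_
          simp
  omega

lemma effect_closed (v : Fin t × Fin s) (D : Finset (Fin t × Fin s))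
    (hop : v.1 ∉ openCols s t (D ∪ cn (caterpillar s t) v)) :
    openCols s t (D ∪ cn (caterpillar s t) v) = (openCols s t D).erase v.1 ∧
    hits s t (D ∪ cn (caterpillar s t) v) ≤ hits s t D := by
  set G := caterpillar s t
  set D' := D ∪ cn G v with hD'
  have hopeq : openCols s t D' = (openCols s t D).erase v.1 := by
    ext j
    by_cases hj : j = v.1
    · subst hj
      exact iff_of_false hop (fun h => (Finset.mem_erase.1 h).1 rfl)
    · rw [Finset.mem_erase, open_iff_of_ne hj]
      exact (and_iff_right hj).symm
  refine ⟨hopeq, ?_⟩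
  rw [hits, hits, hopeq]
  have herase : ∀ j ∈ (openCols s t D).erase v.1,
      (lv s t j ∩ D').card = (lv s t j ∩ D).card := by
    intro j hj
    rw [lv_inter_union_eq (Finset.mem_erase.1 hj).1]
  rw [Finset.sum_congr rfl herase]
  exact Finset.sum_le_sum_of_subset (Finset.erase_subset _ _)

lemma effect (v : Fin t × Fin s) (D : Finset (Fin t × Fin s)) :
    (nOpen s t (D ∪ cn (caterpillar s t) v) = nOpen s t D ∧
      hits s t (D ∪ cn (caterpillar s t) v) ≤ hits s t D + 1) ∨
    (nOpen s t D ≤ nOpen s t (D ∪ cn (caterpillar s t) v) + 1 ∧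
      nOpen s t (D ∪ cn (caterpillar s t) v) ≤ nOpen s t D ∧
      hits s t (D ∪ cn (caterpillar s t) v) ≤ hits s t D) := by
  by_cases hop : v.1 ∈ openCols s t (D ∪ cn (caterpillar s t) v)
  · obtain ⟨h1, h2⟩ := effect_open v D hop
    exact Or.inl ⟨by rw [nOpen, nOpen, h1], h2⟩
  · obtain ⟨h1, h2⟩ := effect_closed v D hop
    right
    refine ⟨?_, ?_, h2⟩ <;> rw [nOpen, nOpen, h1]
    · by_cases hv : v.1 ∈ openCols s t D
      · rw [Finset.card_erase_of_mem hv]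
        have := Finset.card_pos.2 ⟨_, hv⟩
        omega
      · rw [Finset.erase_eq_of_notMem hv]
        omega
    · exact Finset.card_le_card (Finset.erase_subset _ _)

lemma card_lv (hs1 : 1 ≤ s) (i : Fin t) : (lv s t i).card = s - 1 := by
  have hprod : lv s t i = {i} ×ˢ (univ.filter fun x : Fin s => (x : ℕ) ≠ 0) := by
    ext p
    rw [Finset.mem_product, mem_lv, Finset.mem_singleton]
    simp
  have h0 : (univ.filter fun x : Fin s => (x : ℕ) ≠ 0) = univ.erase (⟨0, hs1⟩ : Fin s) := by
    ext x
    simp [Fin.ext_iff]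
  rw [hprod, Finset.card_product, Finset.card_singleton, one_mul, h0,
    Finset.card_erase_of_mem (Finset.mem_univ _), Finset.card_univ, Fintype.card_fin]

lemma ne_univ_of_open {D : Finset (Fin t × Fin s)} (h : nOpen s t D ≠ 0) : D ≠ univ := by
  obtain ⟨i, hi⟩ := Finset.card_pos.1 (Nat.pos_of_ne_zero h)
  obtain ⟨x, -, hxD⟩ := Finset.not_subset.1 (mem_openCols.1 hi)
  intro hD
  exact hxD (hD ▸ Finset.mem_univ x)

lemma nOpen_univ : nOpen s t (univ : Finset (Fin t × Fin s)) = 0 := by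
  rw [nOpen, Finset.card_eq_zero]
  ext i
  simp [mem_openCols]

lemma stallerA {D : Finset (Fin t × Fin s)} {i : Fin t} {x y : Fin t × Fin s}
    (hx : x ∈ lv s t i) (hxD : x ∉ D) (hy : y ∈ lv s t i) (hyD : y ∉ D) (hxy : x ≠ y) :
    ¬ cn (caterpillar s t) x ⊆ D ∧
    nOpen s t (D ∪ cn (caterpillar s t) x) = nOpen s t D ∧
    hits s t (D ∪ cn (caterpillar s t) x) ≤ hits s t D + 1 := by
  have hleg : ¬ cn (caterpillar s t) x ⊆ D :=
    fun hsub => hxD (hsub (self_mem_cn x))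
  have hx1 : x.1 = i := (mem_lv.1 hx).1
  have hx2 : (x.2 : ℕ) ≠ 0 := (mem_lv.1 hx).2
  have hylv : y ∈ lv s t x.1 := by rw [hx1]; exact hy
  have hop : x.1 ∈ openCols s t (D ∪ cn (caterpillar s t) x) := by
    rw [mem_openCols]
    intro hsub
    rcases Finset.mem_union.1 (hsub hylv) with h' | h'
    · exact hyD h'
    · exact hxy (cn_leaf_lv_self hx2 hylv h').symm
  obtain ⟨h1, h2⟩ := effect_open x D hop
  exact ⟨hleg, by rw [nOpen, nOpen, h1], h2⟩

lemma psi_eq_zero_iff {D : Finset (Fin t × Fin s)} : psi s t D = 0 ↔ D = univ := by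
  constructor
  · intro h
    rw [psi, Finset.card_eq_zero] at h
    apply Finset.eq_univ_of_forall
    intro p
    by_contra hp
    have : p.1 ∈ (univ.filter fun i : Fin t => ¬ colF s t i ⊆ D) := by
      simp only [Finset.mem_filter, Finset.mem_univ, true_and]
      exact fun hsub => hp (hsub (mem_colF.2 rfl))
    rw [h] at this
    exact absurd this (Finset.notMem_empty _)
  · rintro rfl
    rw [psi, Finset.card_eq_zero]
    ext i
    simp

lemma psi_antitone {D D' : Finset (Fin t × Fin s)} (h : D ⊆ D') :
    psi s t D' ≤ psi s t D := by
  apply Finset.card_le_card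
  intro i hi
  simp only [Finset.mem_filter, Finset.mem_univ, true_and] at *
  exact fun hsub => hi (hsub.trans h)

lemma psi_spine (hs1 : 0 < s) {D : Finset (Fin t × Fin s)} {i : Fin t}
    (h : ¬ colF s t i ⊆ D) :
    psi s t (D ∪ cn (caterpillar s t) (i, (⟨0, hs1⟩ : Fin s))) + 1 ≤ psi s t D := by
  set v : Fin t × Fin s := (i, (⟨0, hs1⟩ : Fin s))
  have hcol : colF s t i ⊆ cn (caterpillar s t) v := colF_sub_cn (v := v) rfl
  have hmem : i ∈ (univ.filter fun j : Fin t => ¬ colF s t j ⊆ D) := by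
    simp only [Finset.mem_filter, Finset.mem_univ, true_and]; exact h
  have hsub : (univ.filter fun j : Fin t => ¬ colF s t j ⊆ D ∪ cn (caterpillar s t) v)
      ⊆ (univ.filter fun j : Fin t => ¬ colF s t j ⊆ D).erase i := by
    intro j hj
    simp only [Finset.mem_filter, Finset.mem_univ, true_and] at hj
    rw [Finset.mem_erase]
    constructor
    · rintro rfl
      exact hj (hcol.trans Finset.subset_union_right)
    · simp only [Finset.mem_filter, Finset.mem_univ, true_and]
      exact fun hsub' => hj (hsub'.trans Finset.subset_union_left)
  have := Finset.card_le_card hsub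
  rw [Finset.card_erase_of_mem hmem] at this
  have hpos := Finset.card_pos.2 ⟨i, hmem⟩
  rw [psi, psi]
  omega

lemma lb (hs1 : 1 ≤ s) (n : ℕ) : ∀ D : Finset (Fin t × Fin s),
    ((univ : Finset (Fin t × Fin s)) \ D).card ≤ n →
    nOpen s t D + min (nOpen s t D - 1) (s - 2 - hits s t D)
      ≤ auxVal (caterpillar s t) n true D ∧
    nOpen s t D + min (nOpen s t D) (s - 2 - hits s t D)
      ≤ auxVal (caterpillar s t) n false D := by
  induction n with
  | zero =>
    intro D hD
    have hDuniv : D = univ := by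
      have := Finset.sdiff_eq_empty_iff_subset.1 (Finset.card_eq_zero.1 (Nat.le_zero.1 hD))
      exact Finset.univ_subset_iff.1 this
    subst hDuniv
    simp [nOpen_univ]
  | succ n ih =>
    intro D hcard
    by_cases hu : nOpen s t D = 0
    · rw [hu]
      simp
    · have hDne : D ≠ univ := ne_univ_of_open hu
      constructor
      · refine auxVal_true_succ_ge hDne ?_
        intro v hv
        have hfuel : ((univ : Finset (Fin t × Fin s)) \ (D ∪ cn (caterpillar s t) v)).card ≤ n := by
          have := card_sdiff_union_lt hv
          omega
        have IH := (ih _ hfuel).2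
        rcases effect v D with ⟨h1, h2⟩ | ⟨h1, h2, h3⟩ <;> omega
      · by_cases hA : ∃ i ∈ openCols s t D, ∃ x ∈ lv s t i \ D, ∃ y ∈ lv s t i \ D, x ≠ y
        · obtain ⟨i, hi, x, hx, y, hy, hxy⟩ := hA
          rw [Finset.mem_sdiff] at hx hy
          obtain ⟨hleg, h1, h2⟩ := stallerA hx.1 hx.2 hy.1 hy.2 hxy
          have hfuel : ((univ : Finset (Fin t × Fin s)) \ (D ∪ cn (caterpillar s t) x)).card ≤ n := by
            have := card_sdiff_union_lt hleg
            omega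
          have IH := (ih _ hfuel).1
          have hstep := auxVal_false_succ_ge hleg n
          omega
        · obtain ⟨i, hi⟩ := Finset.card_pos.1 (Nat.pos_of_ne_zero hu)
          obtain ⟨x, hxlv, hxD⟩ := Finset.not_subset.1 (mem_openCols.1 hi)
          push_neg at hA
          have hsdiff : lv s t i \ D = {x} := by
            ext y
            simp only [Finset.mem_singleton]
            constructor
            · intro hy
              exact (hA i hi y hy x (Finset.mem_sdiff.2 ⟨hxlv, hxD⟩))
            · rintro rfl
              exact Finset.mem_sdiff.2 ⟨hxlv, hxD⟩
          have hpart := Finset.card_sdiff_add_card_inter (lv s t i) D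
          rw [hsdiff, Finset.card_singleton, card_lv hs1] at hpart
          have hsingle : (lv s t i ∩ D).card ≤ hits s t D :=
            Finset.single_le_sum (f := fun j => (lv s t j ∩ D).card)
              (fun _ _ => Nat.zero_le _) hi
          have hleg : ¬ cn (caterpillar s t) x ⊆ D :=
            fun hsub => hxD (hsub (self_mem_cn x))
          have hfuel : ((univ : Finset (Fin t × Fin s)) \ (D ∪ cn (caterpillar s t) x)).card ≤ n := by
            have := card_sdiff_union_lt hleg
            omega
          have IH := (ih _ hfuel).1
          have hstep := auxVal_false_succ_ge hleg n
          rcases effect x D with ⟨h1, h2⟩ | ⟨h1, h2, h3⟩ <;> omega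

lemma ub (hs1 : 0 < s) (n : ℕ) : ∀ D : Finset (Fin t × Fin s),
    auxVal (caterpillar s t) n true D ≤ 2 * psi s t D - 1 ∧
    auxVal (caterpillar s t) n false D ≤ 2 * psi s t D := by
  induction n with
  | zero => intro D; simp [auxVal]
  | succ n ih =>
    intro D
    by_cases hD : D = univ
    · subst hD
      simp [auxVal_univ]
    · have hpsi : psi s t D ≠ 0 := fun h => hD (psi_eq_zero_iff.1 h)
      constructor
      · obtain ⟨i, hi⟩ := Finset.card_pos.1 (Nat.pos_of_ne_zero hpsi)
        have hcol : ¬ colF s t i ⊆ D := by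
          simpa using (Finset.mem_filter.1 hi).2
        obtain ⟨x, hx, hxD⟩ := Finset.not_subset.1 hcol
        have hleg : ¬ cn (caterpillar s t) (i, (⟨0, hs1⟩ : Fin s)) ⊆ D :=
          fun hsub => hxD (hsub (colF_sub_cn (v := (i, (⟨0, hs1⟩ : Fin s))) rfl hx))
        have hstep := auxVal_true_succ_le hleg n
        have IH := (ih (D ∪ cn (caterpillar s t) (i, (⟨0, hs1⟩ : Fin s)))).2
        have hdrop := psi_spine hs1 hcol
        omega
      · refine auxVal_false_succ_le hD (fun v hv => ?_)
        have IH := (ih (D ∪ cn (caterpillar s t) v)).1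
        have hmono := psi_antitone (D := D) (D' := D ∪ cn (caterpillar s t) v)
          Finset.subset_union_left
        omega

end Stmt5Aux

/-- for s ≥ t+1 ≥ 2, γ_g(T(s,t)) = 2t − 1. -/
theorem stmt5 (s t : ℕ) (ht : 1 ≤ t) (hs : t + 1 ≤ s) :
    DomGame.gammaG (caterpillar s t) = 2 * t - 1 := by
  have hs1 : 1 ≤ s := by omega
  have hopen : Stmt5Aux.openCols s t (∅ : Finset (Fin t × Fin s)) = univ := by
    ext i
    simp only [Finset.mem_univ, iff_true, Stmt5Aux.mem_openCols]
    intro hsub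
    have hmem : ((i, ⟨1, by omega⟩) : Fin t × Fin s) ∈ Stmt5Aux.lv s t i := by
      rw [Stmt5Aux.mem_lv]; exact ⟨rfl, by simp⟩
    exact absurd (hsub hmem) (Finset.notMem_empty _)
  have hnopen : Stmt5Aux.nOpen s t (∅ : Finset (Fin t × Fin s)) = t := by
    rw [Stmt5Aux.nOpen, hopen, Finset.card_univ, Fintype.card_fin]
  have hhits : Stmt5Aux.hits s t (∅ : Finset (Fin t × Fin s)) = 0 := by
    rw [Stmt5Aux.hits]
    simp
  have hpsi : Stmt5Aux.psi s t (∅ : Finset (Fin t × Fin s)) = t := by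
    rw [Stmt5Aux.psi]
    have huniv : (univ.filter fun i : Fin t =>
        ¬ Stmt5Aux.colF s t i ⊆ (∅ : Finset (Fin t × Fin s))) = univ := by
      ext i
      simp only [Finset.mem_filter, Finset.mem_univ, true_and, iff_true]
      intro hsub
      have hmem : ((i, ⟨0, by omega⟩) : Fin t × Fin s) ∈ Stmt5Aux.colF s t i :=
        Stmt5Aux.mem_colF.2 rfl
      exact absurd (hsub hmem) (Finset.notMem_empty _)
    rw [huniv, Finset.card_univ, Fintype.card_fin]
  have hfuel : ((univ : Finset (Fin t × Fin s)) \ ∅).card ≤ Fintype.card (Fin t × Fin s) := by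
    simp [Finset.card_univ]
  have hlb := (Stmt5Aux.lb hs1 (Fintype.card (Fin t × Fin s)) ∅ hfuel).1
  have hub := (Stmt5Aux.ub (t := t) (by omega : 0 < s) (Fintype.card (Fin t × Fin s)) ∅).1
  rw [hnopen, hhits] at hlb
  rw [hpsi] at hub
  rw [DomGame.gammaG, DomGame.gVal]
  omega
end
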